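/- Let Z be a real random variable such that P(|Z − E[Z]| > y/n) ≤ c₁ exp(−c₂ y) for all y > 0, with c₁ > 0 and c₂ > 1 and n a positive integer. Then (1/n) log E[exp(n Z)] − (1/n) log(1 + c₁/(c₂ − 1)) ≤ E[Z] ≤ (1/n) log E[exp(n Z)]. -/

import Mathlib

open MeasureTheory Real Set

theorem stmt_2 {Ω : Type*} [MeasurableSpace Ω] (μ : Measure Ω) [IsProbabilityMeasure μ]
    (Z : Ω → ℝ) (hZm : Measurable Z) (hZint : Integrable Z μ)
    (n : ℕ) (hn : 1 ≤ n)
    (hexpint : Integrable (fun ω => Real.exp ((n : ℝ) * Z ω)) μ)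
    (c₁ c₂ : ℝ) (hc₁ : 0 < c₁) (hc₂ : 1 < c₂)
    (htail : ∀ y : ℝ, 0 < y →
      (μ {ω | y / n < |Z ω - ∫ ω', Z ω' ∂μ|}).toReal ≤ c₁ * Real.exp (-c₂ * y)) :
    (1 / n : ℝ) * Real.log (∫ ω, Real.exp ((n : ℝ) * Z ω) ∂μ)
        - (1 / n : ℝ) * Real.log (1 + c₁ / (c₂ - 1)) ≤ ∫ ω, Z ω ∂μ ∧
    ∫ ω, Z ω ∂μ ≤ (1 / n : ℝ) * Real.log (∫ ω, Real.exp ((n : ℝ) * Z ω) ∂μ) := by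
  set m : ℝ := ∫ ω, Z ω ∂μ with hm
  have npos : (0 : ℝ) < n := by
    have : (1:ℝ) ≤ n := by exact_mod_cast hn
    linarith
  set I : ℝ := ∫ ω, Real.exp ((n : ℝ) * Z ω) ∂μ with hI
  have hIpos : 0 < I := integral_exp_pos hexpint
  -- Upper bound: Jensen
  have jensen : Real.exp ((n : ℝ) * m) ≤ I := by
    have hconv : ConvexOn ℝ Set.univ Real.exp := convexOn_exp
    have hnZint : Integrable (fun ω => (n : ℝ) * Z ω) μ := hZint.const_mul _
    have h := hconv.map_integral_le (continuous_exp.continuousOn) isClosed_univ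
      (Filter.Eventually.of_forall (fun x => Set.mem_univ _)) hnZint ?_
    · have : ∫ ω, (n : ℝ) * Z ω ∂μ = (n : ℝ) * m := by
        rw [hm, integral_const_mul]
      rwa [this] at h
    · exact hexpint
  have upper : m ≤ (1 / n : ℝ) * Real.log I := by
    have := Real.log_le_log (exp_pos _) jensen
    rw [Real.log_exp] at this
    have h2 : (n : ℝ) * m ≤ Real.log I := this
    calc m = (1 / n : ℝ) * ((n : ℝ) * m) := by field_simp
    _ ≤ (1 / n : ℝ) * Real.log I := by
        apply mul_le_mul_of_nonneg_left h2 (by positivity)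
  refine ⟨?_, upper⟩
  -- Lower bound
  set K : ℝ := 1 + c₁ / (c₂ - 1) with hK
  have hKpos : 0 < K := by
    rw [hK]
    have : 0 < c₁ / (c₂ - 1) := div_pos hc₁ (by linarith)
    linarith
  -- g = exp(n(Z - m))
  set g : Ω → ℝ := fun ω => Real.exp ((n : ℝ) * (Z ω - m)) with hg
  have hgint : Integrable g μ := by
    have : g = fun ω => Real.exp (-(n : ℝ) * m) * Real.exp ((n : ℝ) * Z ω) := by
      funext ω; rw [hg, ← Real.exp_add]; ring_nf
    rw [this]
    exact hexpint.const_mul _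
  have hgnn : 0 ≤ᵐ[μ] g := Filter.Eventually.of_forall fun ω => (exp_pos _).le
  have layercake : ∫ ω, g ω ∂μ = ∫ t in Set.Ioi (0:ℝ), (μ {a | t < g a}).toReal :=
    hgint.integral_eq_integral_meas_lt hgnn
  -- dominating function
  set G : ℝ → ℝ := fun t => if t ≤ 1 then 1 else c₁ * t ^ (-c₂) with hG
  have hGint : IntegrableOn G (Set.Ioi (0:ℝ)) := by
    have h1 : IntegrableOn G (Set.Ioc (0:ℝ) 1) := by
      have hc : IntegrableOn (fun _ : ℝ => (1:ℝ)) (Set.Ioc (0:ℝ) 1) :=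
        (integrableOn_const_iff).mpr (Or.inr measure_Ioc_lt_top)
      exact hc.congr_fun (fun x hx => by simp [hG, hx.2]) measurableSet_Ioc
    have h2 : IntegrableOn G (Set.Ioi (1:ℝ)) := by
      have : IntegrableOn (fun t : ℝ => c₁ * t ^ (-c₂)) (Set.Ioi (1:ℝ)) :=
        (integrableOn_Ioi_rpow_of_lt (by linarith) one_pos).const_mul c₁
      exact this.congr_fun (fun x hx => by simp [hG, not_le.mpr (mem_Ioi.mp hx)])
        measurableSet_Ioi
    have : Set.Ioi (0:ℝ) = Set.Ioc 0 1 ∪ Set.Ioi 1 := (Set.Ioc_union_Ioi_eq_Ioi zero_le_one).symm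
    rw [this]
    exact h1.union h2
  have hFleG : ∀ t ∈ Set.Ioi (0:ℝ), (μ {a | t < g a}).toReal ≤ G t := by
    intro t ht
    by_cases h1 : t ≤ 1
    · simp only [hG, if_pos h1]
      calc (μ {a | t < g a}).toReal ≤ (μ Set.univ).toReal := by
            apply ENNReal.toReal_mono (measure_ne_top _ _) (measure_mono (Set.subset_univ _))
      _ = 1 := by simp
    · push_neg at h1
      simp only [hG, if_neg (not_le.mpr h1)]
      have hlt : 0 < Real.log t := Real.log_pos h1
      have hsub : {a | t < g a} ⊆ {ω | Real.log t / n < |Z ω - m|} := by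
        intro a ha
        simp only [Set.mem_setOf_eq] at ha ⊢
        have : Real.log t < (n : ℝ) * (Z a - m) := by
          have := Real.log_lt_log (lt_trans one_pos h1 |>.trans_le le_rfl |> fun _ => lt_trans zero_lt_one h1) ha
          rwa [Real.log_exp] at this
        calc Real.log t / n < (Z a - m) := by
              rw [div_lt_iff₀ npos]; linarith [mul_comm (n:ℝ) (Z a - m)] 
        _ ≤ |Z a - m| := le_abs_self _
      calc (μ {a | t < g a}).toReal ≤ (μ {ω | Real.log t / n < |Z ω - m|}).toReal :=
            ENNReal.toReal_mono (measure_ne_top _ _) (measure_mono hsub)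
      _ ≤ c₁ * Real.exp (-c₂ * Real.log t) := htail _ hlt
      _ = c₁ * t ^ (-c₂) := by
            rw [Real.rpow_def_of_pos (lt_trans zero_lt_one h1),
              mul_comm (Real.log t) (-c₂)]
  have hGval : ∫ t in Set.Ioi (0:ℝ), G t = K := by
    have hsplit : Set.Ioi (0:ℝ) = Set.Ioc 0 1 ∪ Set.Ioi 1 := (Set.Ioc_union_Ioi_eq_Ioi zero_le_one).symm
    have hdisj : Disjoint (Set.Ioc (0:ℝ) 1) (Set.Ioi 1) := Set.Ioc_disjoint_Ioi le_rfl
    rw [hsplit, setIntegral_union hdisj measurableSet_Ioi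
      (hGint.mono_set (by rw [hsplit]; exact Set.subset_union_left))
      (hGint.mono_set (by rw [hsplit]; exact Set.subset_union_right))]
    have e1 : ∫ t in Set.Ioc (0:ℝ) 1, G t = 1 := by
      rw [setIntegral_congr_fun measurableSet_Ioc (g := fun _ => (1:ℝ))
        (fun x hx => by simp [hG, hx.2])]
      simp
    have e2 : ∫ t in Set.Ioi (1:ℝ), G t = c₁ / (c₂ - 1) := by
      rw [setIntegral_congr_fun measurableSet_Ioi (g := fun t => c₁ * t ^ (-c₂))
        (fun x hx => by simp [hG, not_le.mpr (mem_Ioi.mp hx)])]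
      rw [integral_const_mul, integral_Ioi_rpow_of_lt (by linarith) one_pos]
      rw [Real.one_rpow]
      have h1 : -c₂ + 1 ≠ 0 := by linarith
      have h2 : c₂ - 1 ≠ 0 := by linarith
      field_simp
      ring
    rw [e1, e2, hK]
  have key : ∫ ω, g ω ∂μ ≤ K := by
    rw [layercake, ← hGval]
    apply integral_mono_of_nonneg
    · exact Filter.Eventually.of_forall fun t => ENNReal.toReal_nonneg
    · exact hGint
    · exact (ae_restrict_iff' measurableSet_Ioi).mpr (Filter.Eventually.of_forall hFleG)
  have hgval : ∫ ω, g ω ∂μ = Real.exp (-(n : ℝ) * m) * I := by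
    have : g = fun ω => Real.exp (-(n : ℝ) * m) * Real.exp ((n : ℝ) * Z ω) := by
      funext ω; rw [hg, ← Real.exp_add]; ring_nf
    rw [this, integral_const_mul]
  have hlog : Real.log I - (n : ℝ) * m ≤ Real.log K := by
    have h1 : Real.exp (-(n : ℝ) * m) * I ≤ K := by rw [← hgval]; exact key
    have h2 := Real.log_le_log (by positivity) h1
    rw [Real.log_mul (exp_pos _).ne' hIpos.ne', Real.log_exp] at h2
    linarith
  have : (1 / n : ℝ) * (Real.log I - (n : ℝ) * m) ≤ (1 / n : ℝ) * Real.log K :=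
    mul_le_mul_of_nonneg_left hlog (by positivity)
  have expand : (1 / n : ℝ) * (Real.log I - (n : ℝ) * m) = (1 / n : ℝ) * Real.log I - m := by
    field_simp
  rw [expand] at this
  linarith
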